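/- For all integers m, n, r ≥ 0 and every integer k, in ℤ[q]: L_q^{(m+r)}(n,k) = Σ_{i=0}^{n} q^{m(2i+2r+m-1)} · [2m]_q^{⟨n-i⟩} · qbinom(n,i) · L_q^{(r)}(i,k). -/
import Mathlib


open Finset Polynomial

/-- The q-integer [n]_q = 1 + q + ⋯ + q^{n-1} in ℤ[q]. -/
noncomputable def qint (n : ℕ) : Polynomial ℤ := ∑ i ∈ range n, X ^ i

/-- The q-rising factorial [n]_q^{⟨m⟩} = ∏_{i=n}^{n+m-1} [i]_q. -/
noncomputable def qrise (n m : ℕ) : Polynomial ℤ := ∏ i ∈ range m, qint (n + i)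

/-- The q-binomial coefficient. -/
noncomputable def qbinom : ℕ → ℕ → Polynomial ℤ
  | _, 0 => 1
  | 0, _ + 1 => 0
  | n + 1, k + 1 => qbinom n k + X ^ (k + 1) * qbinom n (k + 1)

/-- The q-Lah numbers (natural-number index version). -/
noncomputable def qLahNat : ℕ → ℕ → Polynomial ℤ
  | 0, 0 => 1
  | 0, _ + 1 => 0
  | _ + 1, 0 => 0
  | n + 1, k + 1 => X ^ (n + k) * qLahNat n k + qint (n + k + 1) * qLahNat n (k + 1)

/-- The q-Lah numbers, vanishing for negative second index. -/
noncomputable def qLah (n : ℕ) (k : ℤ) : Polynomial ℤ :=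
  if 0 ≤ k then qLahNat n k.toNat else 0

/-- The q-r-Lah numbers. -/
noncomputable def qrLah (r n : ℕ) (k : ℤ) : Polynomial ℤ :=
  ∑ i ∈ range (n + 1), X ^ (r * (2 * i + r - 1)) * qrise (2 * r) (n - i) * qbinom n i *
    qLah i k

lemma qint_zero : qint 0 = 0 := by simp [qint]
lemma qint_one : qint 1 = 1 := by simp [qint]
lemma qint_add (a b : ℕ) : qint (a + b) = qint a + X ^ a * qint b := by
  simp [qint, Finset.sum_range_add, pow_add, Finset.mul_sum]
lemma qrise_zero (n : ℕ) : qrise n 0 = 1 := by simp [qrise]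
lemma qrise_succ (n m : ℕ) : qrise n (m + 1) = qrise n m * qint (n + m) :=
  Finset.prod_range_succ _ _
lemma qbinom_zero_right (n : ℕ) : qbinom n 0 = 1 := by cases n <;> rfl
lemma qbinom_succ_succ (n k : ℕ) :
    qbinom (n + 1) (k + 1) = qbinom n k + X ^ (k + 1) * qbinom n (k + 1) := rfl

lemma qbinom_eq_zero_of_lt : ∀ {n k : ℕ}, n < k → qbinom n k = 0
  | 0, _ + 1, _ => rfl
  | n + 1, k + 1, h => by
    rw [qbinom_succ_succ, qbinom_eq_zero_of_lt (by omega : n < k),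
      qbinom_eq_zero_of_lt (by omega : n < k + 1)]
    ring

lemma qbinom_self : ∀ n : ℕ, qbinom n n = 1
  | 0 => rfl
  | n + 1 => by
    rw [qbinom_succ_succ, qbinom_self n, qbinom_eq_zero_of_lt (by omega)]
    ring

lemma qbinom_one : ∀ n : ℕ, qbinom n 1 = qint n
  | 0 => by rw [qint_zero]; rfl
  | n + 1 => by
    have hA : qint (n + 1) = 1 + X * qint n := by
      rw [show n + 1 = 1 + n by omega, qint_add, qint_one, pow_one]
    rw [show qbinom (n + 1) 1 = qbinom n 0 + X ^ (0 + 1) * qbinom n 1 from rfl,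
      qbinom_zero_right, qbinom_one n, pow_one]
    exact hA.symm

lemma pascal2 : ∀ n k : ℕ, k ≤ n →
    qbinom (n + 1) (k + 1) = X ^ (n - k) * qbinom n k + qbinom n (k + 1)
  | 0, 0, _ => by simp [qbinom_succ_succ, qbinom_zero_right, qbinom_eq_zero_of_lt]
  | n + 1, 0, _ => by
    simp only [Nat.zero_add, Nat.sub_zero]
    have hB : qint (n + 2) = qint (n + 1) + X ^ (n + 1) := by
      rw [show n + 2 = (n + 1) + 1 from rfl, qint_add, qint_one, mul_one]
    rw [show qbinom (n + 2) 1 = qbinom (n + 1) 0 + X ^ (0 + 1) * qbinom (n + 1) 1 from rfl,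
      qbinom_zero_right, qbinom_one, pow_one]
    have hA : qint (n + 2) = 1 + X * qint (n + 1) := by
      rw [show n + 2 = 1 + (n + 1) by omega, qint_add, qint_one, pow_one]
    linear_combination hB - hA
  | n + 1, k + 1, h => by
    rcases Nat.lt_or_ge (k + 1) (n + 1) with h2 | h2
    · obtain ⟨e, he⟩ : ∃ e, n - (k + 1) = e := ⟨_, rfl⟩
      have hn1 : n + 1 - (k + 1) = e + 1 := by omega
      have d1 := qbinom_succ_succ (n + 1) (k + 1)
      have d2 := qbinom_succ_succ n k
      have d3 := qbinom_succ_succ n (k + 1)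
      have p1 := pascal2 n k (by omega)
      have p2 := pascal2 n (k + 1) (by omega)
      rw [show n - k = e + 1 by omega] at p1; rw [he] at p2; rw [hn1]
      linear_combination d1 - X ^ (e + 1) * d2 - d3 + p1 + X ^ (k + 2) * p2
    · have hk : k = n := by omega
      subst hk
      rw [qbinom_self, qbinom_self, Nat.sub_self,
        qbinom_eq_zero_of_lt (Nat.lt_succ_self _)]
      simp

lemma qbinom_mul : ∀ n i j : ℕ, j ≤ i →
    qbinom n i * qbinom i j = qbinom n j * qbinom (n - j) (i - j)
  | n, i, 0, _ => by simp [qbinom_zero_right]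
  | 0, 0, _ + 1, h => by omega
  | 0, i + 1, j + 1, h => by
    rw [show qbinom 0 (i + 1) = 0 from rfl]
    rw [show qbinom 0 (j + 1) = 0 from rfl]
    ring
  | n + 1, 0, j + 1, h => by omega
  | n + 1, i + 1, j + 1, h => by
    rcases Nat.lt_or_ge j i with hji | hji
    · -- j < i
      rcases Nat.lt_or_ge j n with hjn | hjn
      · -- j < n : general case
        obtain ⟨d, hd⟩ : ∃ d, i = j + d + 1 := ⟨i - j - 1, by omega⟩
        obtain ⟨e, hee⟩ : ∃ e, n = j + e + 1 := ⟨n - j - 1, by omega⟩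
        subst hd; subst hee
        have IH1 := qbinom_mul (j + e + 1) (j + d + 1) j (by omega)
        have IH2 := qbinom_mul (j + e + 1) (j + d + 1) (j + 1) (by omega)
        have IH3 := qbinom_mul (j + e + 1) (j + d + 1 + 1) (j + 1) (by omega)
        have s1 : j + d + 1 - j = d + 1 := by omega
        have s2 : j + e + 1 - j = e + 1 := by omega
        have s3 : j + d + 1 - (j + 1) = d := by omega
        have s4 : j + e + 1 - (j + 1) = e := by omega
        have s5 : j + d + 1 + 1 - (j + 1) = d + 1 := by omega
        have s6 : j + e + 1 + 1 - (j + 1) = e + 1 := by omega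
        rw [s1, s2] at IH1; rw [s3, s4] at IH2; rw [s4, s5] at IH3
        have d1 := qbinom_succ_succ (j + e + 1) (j + d + 1)
        have d2 := qbinom_succ_succ (j + d + 1) j
        have d3 := qbinom_succ_succ (j + e + 1) j
        have d4 := qbinom_succ_succ e d
        rw [s6, s5]
        linear_combination qbinom (j + d + 1 + 1) (j + 1) * d1 +
          qbinom (j + e + 1) (j + d + 1) * d2 + IH1 + X ^ (j + 1) * IH2 +
          X ^ (j + d + 2) * IH3 - qbinom (e + 1) (d + 1) * d3 -
          X ^ (j + 1) * qbinom (j + e + 1) (j + 1) * d4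
      · -- n ≤ j < i
        have z1 : qbinom n (i + 1) = 0 := qbinom_eq_zero_of_lt (by omega)
        have z2 : qbinom n i = 0 := qbinom_eq_zero_of_lt (by omega)
        have z3 : qbinom (n + 1 - (j + 1)) (i + 1 - (j + 1)) = 0 := by
          rw [show n + 1 - (j + 1) = 0 by omega]
          exact qbinom_eq_zero_of_lt (by omega)
        rw [qbinom_succ_succ n i, z1, z2, z3]
        ring
    · -- j = i
      have : j = i := by omega
      subst this
      rw [qbinom_self, Nat.sub_self, qbinom_zero_right, mul_one]

lemma qvdm (a b N : ℕ) :
    ∑ s ∈ range (N + 1), X ^ (a * s) * qrise a (N - s) * qrise b s * qbinom N s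
      = qrise (a + b) N := by
  induction N with
  | zero => simp [qrise, qbinom_zero_right]
  | succ N ih =>
    rw [qrise_succ, ← ih, Finset.sum_mul]
    have hsplit : ∀ s ∈ range (N + 1),
        X ^ (a * s) * qrise a (N - s) * qrise b s * qbinom N s * qint (a + b + N)
          = X ^ (a * s) * qrise a (N + 1 - s) * qrise b s * qbinom N s
            + X ^ (a * s) * X ^ (a + (N - s)) * qrise a (N - s) * qrise b (s + 1) *
              qbinom N s := by
      intro s hs
      rw [Finset.mem_range] at hs
      have h1 : a + b + N = (a + (N - s)) + (b + s) := by omega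
      rw [h1, qint_add]
      have h2 : qrise a (N + 1 - s) = qrise a (N - s) * qint (a + (N - s)) := by
        rw [show N + 1 - s = (N - s) + 1 by omega, qrise_succ,
          show a + (N - s) = a + (N - s) from rfl]
      have h3 : qrise b (s + 1) = qrise b s * qint (b + s) := qrise_succ ..
      rw [h2, h3]
      ring
    rw [Finset.sum_congr rfl hsplit, Finset.sum_add_distrib]
    have hF : ∀ s ∈ range (N + 1),
        X ^ (a * (s + 1)) * qrise a (N + 1 - (s + 1)) * qrise b (s + 1) *
          qbinom (N + 1) (s + 1)
        = X ^ (a * s) * X ^ (a + (N - s)) * qrise a (N - s) * qrise b (s + 1) * qbinom N s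
          + X ^ (a * (s + 1)) * qrise a (N + 1 - (s + 1)) * qrise b (s + 1) *
            qbinom N (s + 1) := by
      intro s hs
      rw [Finset.mem_range] at hs
      rw [pascal2 N s (by omega), show N + 1 - (s + 1) = N - s by omega, mul_add]
      have : a * (s + 1) = a * s + a := by ring
      rw [this]
      ring
    rw [Finset.sum_range_succ' (fun s => X ^ (a * s) * qrise a (N + 1 - s) * qrise b s *
      qbinom (N + 1) s) (N + 1)]
    rw [Finset.sum_congr rfl hF, Finset.sum_add_distrib]
    have hzero : X ^ (a * 0) * qrise a (N + 1 - 0) * qrise b 0 * qbinom (N + 1) 0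
        = X ^ (a * 0) * qrise a (N + 1 - 0) * qrise b 0 * qbinom N 0 := by
      rw [qbinom_zero_right, qbinom_zero_right]
    rw [hzero]
    have htail : (∑ s ∈ range (N + 1),
        X ^ (a * (s + 1)) * qrise a (N + 1 - (s + 1)) * qrise b (s + 1) * qbinom N (s + 1))
        + X ^ (a * 0) * qrise a (N + 1 - 0) * qrise b 0 * qbinom N 0
        = ∑ s ∈ range (N + 1), X ^ (a * s) * qrise a (N + 1 - s) * qrise b s * qbinom N s := by
      rw [← Finset.sum_range_succ' (fun s => X ^ (a * s) * qrise a (N + 1 - s) * qrise b s *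
        qbinom N s) (N + 1), Finset.sum_range_succ]
      rw [qbinom_eq_zero_of_lt (Nat.lt_succ_self N)]
      ring
    linear_combination htail

lemma expE (m r j s : ℕ) :
    m * (2 * (j + s) + 2 * r + m - 1) + r * (2 * j + r - 1)
      = (m + r) * (2 * j + (m + r) - 1) + 2 * m * s := by
  cases m with
  | zero => simp
  | succ m =>
    cases r with
    | zero =>
      rw [show 2 * (j + s) + 2 * 0 + (m + 1) - 1 = 2 * (j + s) + m by omega,
        show 2 * j + (m + 1 + 0) - 1 = 2 * j + m by omega]
      ring
    | succ r =>
      rw [show 2 * (j + s) + 2 * (r + 1) + (m + 1) - 1 = 2 * (j + s) + 2 * r + m + 2 by omega,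
        show 2 * j + (r + 1) - 1 = 2 * j + r by omega,
        show 2 * j + (m + 1 + (r + 1)) - 1 = 2 * j + m + r + 1 by omega]
      ring

lemma key (m r n j : ℕ) (hj : j ≤ n) :
    (∑ i ∈ range (n + 1), X ^ (m * (2 * i + 2 * r + m - 1)) * qrise (2 * m) (n - i) *
        qbinom n i * (X ^ (r * (2 * j + r - 1)) * qrise (2 * r) (i - j) * qbinom i j))
      = X ^ ((m + r) * (2 * j + (m + r) - 1)) * qrise (2 * (m + r)) (n - j) * qbinom n j := by
  rw [show n + 1 = j + (n - j + 1) by omega, Finset.sum_range_add]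
  have hz : ∀ i ∈ range j, X ^ (m * (2 * i + 2 * r + m - 1)) * qrise (2 * m) (n - i) *
      qbinom n i * (X ^ (r * (2 * j + r - 1)) * qrise (2 * r) (i - j) * qbinom i j)
      = 0 := by
    intro i hi
    rw [Finset.mem_range] at hi
    rw [qbinom_eq_zero_of_lt hi]
    ring
  rw [Finset.sum_congr rfl hz, Finset.sum_const_zero, zero_add]
  have hterm : ∀ s ∈ range (n - j + 1),
      X ^ (m * (2 * (j + s) + 2 * r + m - 1)) * qrise (2 * m) (n - (j + s)) *
        qbinom n (j + s) *
        (X ^ (r * (2 * j + r - 1)) * qrise (2 * r) (j + s - j) * qbinom (j + s) j)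
      = (X ^ ((m + r) * (2 * j + (m + r) - 1)) * qbinom n j) *
        (X ^ (2 * m * s) * qrise (2 * m) (n - j - s) * qrise (2 * r) s * qbinom (n - j) s) := by
    intro s hs
    rw [Finset.mem_range] at hs
    have e1 : j + s - j = s := by omega
    have e2 : n - (j + s) = n - j - s := by omega
    rw [e1, e2]
    have hq := qbinom_mul n (j + s) j (by omega)
    rw [e1] at hq
    have hX : (X : Polynomial ℤ) ^ (m * (2 * (j + s) + 2 * r + m - 1)) *
          X ^ (r * (2 * j + r - 1))
        = X ^ ((m + r) * (2 * j + (m + r) - 1)) * X ^ (2 * m * s) := by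
      rw [← pow_add, ← pow_add, expE]
    linear_combination (X ^ (m * (2 * (j + s) + 2 * r + m - 1)) *
        X ^ (r * (2 * j + r - 1)) * qrise (2 * m) (n - j - s) * qrise (2 * r) s) * hq +
      (qbinom n j * qbinom (n - j) s * qrise (2 * m) (n - j - s) * qrise (2 * r) s) * hX
  rw [Finset.sum_congr rfl hterm, ← Finset.mul_sum]
  have := qvdm (2 * m) (2 * r) (n - j)
  rw [this, show 2 * m + 2 * r = 2 * (m + r) by ring]
  ring

theorem qrLah_shift (m n r : ℕ) (k : ℤ) :
    qrLah (m + r) n k =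
      ∑ i ∈ range (n + 1), X ^ (m * (2 * i + 2 * r + m - 1)) * qrise (2 * m) (n - i) *
        qbinom n i * qrLah r i k := by
  have hext : ∀ i ∈ range (n + 1),
      X ^ (m * (2 * i + 2 * r + m - 1)) * qrise (2 * m) (n - i) * qbinom n i * qrLah r i k
      = ∑ j ∈ range (n + 1),
          X ^ (m * (2 * i + 2 * r + m - 1)) * qrise (2 * m) (n - i) * qbinom n i *
            (X ^ (r * (2 * j + r - 1)) * qrise (2 * r) (i - j) * qbinom i j * qLah j k) := by
    intro i hi
    rw [Finset.mem_range] at hi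
    have hsub : qrLah r i k = ∑ j ∈ range (n + 1),
        X ^ (r * (2 * j + r - 1)) * qrise (2 * r) (i - j) * qbinom i j * qLah j k := by
      rw [qrLah]
      refine Finset.sum_subset (Finset.range_subset_range.mpr (by omega)) ?_
      intro j hjn hji
      rw [Finset.mem_range] at hjn hji
      rw [qbinom_eq_zero_of_lt (show i < j by omega)]
      ring
    rw [hsub, Finset.mul_sum]
  rw [Finset.sum_congr rfl hext, Finset.sum_comm, qrLah]
  refine Finset.sum_congr rfl ?_
  intro j hj
  rw [Finset.mem_range] at hj
  have hterm : ∀ i ∈ range (n + 1),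
      X ^ (m * (2 * i + 2 * r + m - 1)) * qrise (2 * m) (n - i) * qbinom n i *
        (X ^ (r * (2 * j + r - 1)) * qrise (2 * r) (i - j) * qbinom i j * qLah j k)
      = (X ^ (m * (2 * i + 2 * r + m - 1)) * qrise (2 * m) (n - i) * qbinom n i *
          (X ^ (r * (2 * j + r - 1)) * qrise (2 * r) (i - j) * qbinom i j)) * qLah j k := by
    intro i _
    ring
  rw [Finset.sum_congr rfl hterm, ← Finset.sum_mul, key m r n j (by omega)]
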